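/- arXiv:2511.03009 — 5 statements merged into one kernel-verified Lean document; each statement's English description precedes it below -/
import Mathlib

section
/- Let s ∈ ℂ with Re(s) > 1. For each q ∈ (0,1) and each integer r ≥ 1 let α_r(s,q) ∈ ℂ be given. Suppose there exist a bounded function χ : ℕ → ℂ and constants C > 0 and σ > Re(s) such that: (i) for every r ≥ 1, α_r(s,q) → χ(r)/r^s as q → 1⁻; and (ii) |α_r(s,q)| ≤ C r^{-σ} for all q ∈ (0,1) and all r ≥ 1. For n ≥ 1 define β_n(s,q) = Σ_{r=1}^{n} q^r α_r(s,q) / ((q;q)_{n-r} (q;q)_{n+r}) and T_n(s,q) = √n · (2n)! · (1-q)^{2n} · β_n(s,q) / 4^n. Then for each n the limit A_n(s) := lim_{q→1⁻} T_n(s,q) exists, and lim_{n→∞} A_n(s) = L(s,χ)/√π, where L(s,χ) := Σ_{r=1}^{∞} χ(r)/r^s. -/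
open Finset Filter Topology

/-- `(q;q)_m = ∏_{j=1}^m (1 - q^j)`. -/
noncomputable def qPoch (q : ℝ) (m : ℕ) : ℝ := ∏ j ∈ Finset.range m, (1 - q ^ (j + 1))

/-- `β_n(s,q) = Σ_{r=1}^{n} q^r α_r(s,q) / ((q;q)_{n-r} (q;q)_{n+r})`. -/
noncomputable def betaSeq (α : ℕ → ℝ → ℂ) (n : ℕ) (q : ℝ) : ℂ :=
  ∑ r ∈ Finset.Icc 1 n,
    (q : ℂ) ^ r * α r q / ((qPoch q (n - r) : ℂ) * (qPoch q (n + r) : ℂ))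

/-- `T_n(s,q) = √n (2n)! (1-q)^{2n} β_n(s,q) / 4^n`. -/
noncomputable def Tseq (α : ℕ → ℝ → ℂ) (n : ℕ) (q : ℝ) : ℂ :=
  (Real.sqrt n : ℂ) * ((2 * n).factorial : ℂ) * ((1 : ℂ) - (q : ℂ)) ^ (2 * n)
    * betaSeq α n q / 4 ^ n

noncomputable def gC (q : ℝ) (m : ℕ) : ℂ :=
  ∏ j ∈ Finset.range m, ∑ i ∈ Finset.range (j + 1), (q : ℂ) ^ i

lemma qPoch_eq (q : ℝ) (m : ℕ) :
    (qPoch q m : ℂ) = ((1 : ℂ) - q) ^ m * gC q m := by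
  unfold qPoch gC
  push_cast
  rw [show ((1:ℂ) - q) ^ m = ∏ _j ∈ Finset.range m, ((1:ℂ) - q) by
    simp, ← Finset.prod_mul_distrib]
  refine Finset.prod_congr rfl fun j _ => ?_
  have h := geom_sum_mul ((q : ℂ)) (j + 1)
  linear_combination h

lemma gC_ne_zero {q : ℝ} (hq : 0 < q) (m : ℕ) : gC q m ≠ 0 := by
  unfold gC
  rw [Finset.prod_ne_zero_iff]
  intro j _
  have h : (0:ℝ) < ∑ i ∈ Finset.range (j+1), q ^ i := by
    apply Finset.sum_pos (fun i _ => by positivity)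
    exact Finset.nonempty_range_iff.mpr (Nat.succ_ne_zero j)
  have h2 : ((∑ i ∈ Finset.range (j+1), q ^ i : ℝ) : ℂ) ≠ 0 := by exact_mod_cast h.ne'
  rwa [show ((∑ i ∈ Finset.range (j+1), q ^ i : ℝ) : ℂ)
      = ∑ i ∈ Finset.range (j+1), (q:ℂ) ^ i by push_cast; ring] at h2

lemma gC_tendsto (m : ℕ) :
    Tendsto (fun q : ℝ => gC q m) (𝓝[Set.Ioo (0:ℝ) 1] 1) (𝓝 ((m.factorial : ℂ))) := by
  have hc : Continuous fun q : ℝ => gC q m := by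
    unfold gC
    apply continuous_finset_prod
    intro j _
    exact continuous_finset_sum _ fun i _ => (Complex.continuous_ofReal.pow i)
  have h1 : gC 1 m = (m.factorial : ℂ) := by
    unfold gC
    simp only [Complex.ofReal_one, one_pow, Finset.sum_const, Finset.card_range,
      nsmul_eq_mul, mul_one]
    rw [← Nat.cast_prod]
    norm_cast
    exact Finset.prod_range_add_one_eq_factorial m
  have := hc.tendsto 1
  rw [h1] at this
  exact this.mono_left nhdsWithin_le_nhds

noncomputable def Acoef (n k : ℕ) : ℝ :=
  Real.sqrt n * (2 * n).factorial / (4 ^ n * (n - k).factorial * (n + k).factorial)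

lemma Acoef_nonneg (n k : ℕ) : 0 ≤ Acoef n k := by
  unfold Acoef; positivity

lemma Acoef_eq_choose {n k : ℕ} (hk : k ≤ n) :
    Acoef n k = Real.sqrt n * ((2 * n).choose (n + k)) / 4 ^ n := by
  have h := Nat.choose_mul_factorial_mul_factorial (show n + k ≤ 2 * n by omega)
  rw [show 2 * n - (n + k) = n - k by omega] at h
  have h' : (((2*n).choose (n+k) : ℝ)) * (n + k).factorial * (n - k).factorial
      = ((2*n).factorial : ℝ) := by exact_mod_cast congrArg Nat.cast h
  unfold Acoef
  rw [← h']
  have h1 : ((n - k).factorial : ℝ) ≠ 0 := by positivity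
  have h2 : ((n + k).factorial : ℝ) ≠ 0 := by positivity
  field_simp

lemma Acoef_le_Acoef_zero {n k : ℕ} (hk : k ≤ n) : Acoef n k ≤ Acoef n 0 := by
  rw [Acoef_eq_choose hk, Acoef_eq_choose (Nat.zero_le n)]
  have h : (2 * n).choose (n + k) ≤ (2 * n).choose n := by
    have := Nat.choose_le_middle (n + k) (2 * n)
    rwa [show 2 * n / 2 = n by omega] at this
  have h' : ((2 * n).choose (n + k) : ℝ) ≤ ((2 * n).choose n : ℝ) := by exact_mod_cast h
  rw [Nat.add_zero]
  gcongr

lemma Acoef_zero_eq (n : ℕ) (hn : 1 ≤ n) :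
    Acoef n 0 = Stirling.stirlingSeq (2 * n) / (Stirling.stirlingSeq n) ^ 2 := by
  have hx : (0:ℝ) < n := by exact_mod_cast hn
  have he : (0:ℝ) < Real.exp 1 := Real.exp_pos 1
  have hsx : (0:ℝ) < Real.sqrt n := Real.sqrt_pos.mpr hx
  have hs2x : (0:ℝ) < Real.sqrt (2 * (n:ℝ)) := Real.sqrt_pos.mpr (by linarith)
  have hxe : (0:ℝ) < (n:ℝ) / Real.exp 1 := by positivity
  have hf : ((n.factorial : ℝ)) ≠ 0 := by positivity
  unfold Acoef Stirling.stirlingSeq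
  rw [Nat.sub_zero, Nat.add_zero]
  push_cast
  have h4 : Real.sqrt (2 * (2 * (n:ℝ))) = 2 * Real.sqrt n := by
    rw [show 2 * (2 * (n:ℝ)) = 4 * n by ring, show (4:ℝ) = 2^2 by norm_num,
      Real.sqrt_mul (by positivity), Real.sqrt_sq (by norm_num)]
  have h5 : (2 * (n:ℝ) / Real.exp 1) ^ (2 * n) = 4 ^ n * ((n:ℝ) / Real.exp 1) ^ (2 * n) := by
    rw [show 2 * (n:ℝ) / Real.exp 1 = 2 * ((n:ℝ) / Real.exp 1) by ring, mul_pow,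
      pow_mul]
    norm_num
  rw [h4, h5]
  have h6 : (n:ℝ) = Real.sqrt n * Real.sqrt n := (Real.mul_self_sqrt hx.le).symm
  have h7 : ((n:ℝ) / Real.exp 1) ^ (2 * n) = (((n:ℝ) / Real.exp 1) ^ n) ^ 2 := by
    rw [← pow_mul, mul_comm 2 n]
  rw [h7]
  have hne : (((n:ℝ) / Real.exp 1) ^ n) ≠ 0 := by positivity
  field_simp
  ring_nf
  rw [Real.sq_sqrt hx.le, Real.sq_sqrt (by positivity : (0:ℝ) ≤ (n:ℝ) * 2)]

open Real in
lemma Acoef_zero_tendsto :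
    Tendsto (fun n : ℕ => Acoef n 0) atTop (𝓝 (Real.sqrt π / π)) := by
  have h := Stirling.tendsto_stirlingSeq_sqrt_pi
  have hmul : Tendsto (fun n : ℕ => 2 * n) atTop atTop :=
    tendsto_atTop_mono (fun n : ℕ => by omega : ∀ n : ℕ, n ≤ 2 * n) tendsto_id
  have h2 : Tendsto (fun n : ℕ => Stirling.stirlingSeq (2 * n)) atTop (𝓝 (Real.sqrt π)) :=
    h.comp hmul
  have h3 : Tendsto (fun n : ℕ => (Stirling.stirlingSeq n) ^ 2) atTop (𝓝 π) := by
    have := h.pow 2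
    rwa [Real.sq_sqrt Real.pi_pos.le] at this
  have h4 := h2.div h3 (by positivity)
  apply h4.congr'
  filter_upwards [eventually_ge_atTop 1] with n hn
  exact (Acoef_zero_eq n hn).symm

lemma ratio_tendsto (a b : ℝ) :
    Tendsto (fun n : ℕ => ((n:ℝ) + a) / ((n:ℝ) + b)) atTop (𝓝 1) := by
  have hb : Tendsto (fun n : ℕ => (n:ℝ) + b) atTop atTop :=
    tendsto_atTop_add_const_right _ b tendsto_natCast_atTop_atTop
  have h0 : Tendsto (fun n : ℕ => (a - b) / ((n:ℝ) + b)) atTop (𝓝 0) :=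
    hb.const_div_atTop (a - b)
  have h1 : Tendsto (fun n : ℕ => 1 + (a - b) / ((n:ℝ) + b)) atTop (𝓝 (1 + 0)) :=
    tendsto_const_nhds.add h0
  rw [add_zero] at h1
  apply h1.congr'
  filter_upwards [hb.eventually_gt_atTop 0] with n hn
  field_simp
  ring

lemma Acoef_succ {n k : ℕ} (hk : k < n) :
    Acoef n (k + 1) = Acoef n k * (((n:ℝ) - k) / ((n:ℝ) + k + 1)) := by
  have hm : n - k = (n - (k + 1)) + 1 := by omega
  have hc : ((n:ℝ) - k) = ((n - k : ℕ) : ℝ) := by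
    rw [Nat.cast_sub hk.le]
  unfold Acoef
  rw [show n + (k + 1) = (n + k) + 1 by omega, Nat.factorial_succ (n + k), hm,
    Nat.factorial_succ (n - (k+1))]
  rw [hc, hm]
  push_cast
  have h1 : ((n - (k+1)).factorial : ℝ) ≠ 0 := by positivity
  have h2 : ((n + k).factorial : ℝ) ≠ 0 := by positivity
  have h3 : ((n:ℝ) + k + 1) ≠ 0 := by positivity
  have h4 : ((n - (k+1) : ℕ) : ℝ) + 1 ≠ 0 := by positivity
  field_simp

lemma Acoef_eq_prod {n k : ℕ} (hk : k ≤ n) :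
    Acoef n k = Acoef n 0 * ∏ i ∈ Finset.range k, (((n:ℝ) - i) / ((n:ℝ) + i + 1)) := by
  induction k with
  | zero => simp
  | succ k ih =>
      rw [Acoef_succ (by omega), ih (by omega), Finset.prod_range_succ, mul_assoc]

open Real in
lemma Acoef_tendsto (k : ℕ) :
    Tendsto (fun n : ℕ => Acoef n k) atTop (𝓝 (Real.sqrt π / π)) := by
  have hprod : Tendsto (fun n : ℕ => ∏ i ∈ Finset.range k,
      (((n:ℝ) - i) / ((n:ℝ) + i + 1))) atTop (𝓝 1) := by
    have : Tendsto (fun n : ℕ => ∏ i ∈ Finset.range k,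
        (((n:ℝ) - i) / ((n:ℝ) + i + 1))) atTop (𝓝 (∏ i ∈ Finset.range k, 1)) := by
      apply tendsto_finset_prod
      intro i _
      have := ratio_tendsto (-(i:ℝ)) ((i:ℝ) + 1)
      simpa [sub_eq_add_neg, add_assoc] using this
    simpa using this
  have h := Acoef_zero_tendsto.mul hprod
  rw [mul_one] at h
  apply h.congr'
  filter_upwards [eventually_ge_atTop k] with n hn
  exact (Acoef_eq_prod hn).symm

set_option maxHeartbeats 2000000 in
/-- The generalized Bailey–Zeta limit theorem: under a pointwise limit hypothesis and a
uniform polynomial bound, the two-step limit of `T_n(s,q)` (first `q → 1⁻`, then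
`n → ∞`) exists and equals `L(s,χ)/√π`. -/
theorem generalized_bailey_zeta (s : ℂ) (hs : 1 < s.re)
    (α : ℕ → ℝ → ℂ) (χ : ℕ → ℂ) (B : ℝ) (hχ : ∀ r : ℕ, ‖χ r‖ ≤ B)
    (C : ℝ) (hC : 0 < C) (σ : ℝ) (hσ : s.re < σ)
    (hlim : ∀ r : ℕ, 1 ≤ r →
      Tendsto (fun q : ℝ => α r q) (𝓝[Set.Ioo (0 : ℝ) 1] 1) (𝓝 (χ r / (r : ℂ) ^ s)))
    (hbd : ∀ q ∈ Set.Ioo (0 : ℝ) 1, ∀ r : ℕ, 1 ≤ r → ‖α r q‖ ≤ C * (r : ℝ) ^ (-σ)) :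
    ∃ A : ℕ → ℂ,
      (∀ n : ℕ, 1 ≤ n →
        Tendsto (fun q : ℝ => Tseq α n q) (𝓝[Set.Ioo (0 : ℝ) 1] 1) (𝓝 (A n))) ∧
      Tendsto A atTop
        (𝓝 ((∑' r : ℕ, χ (r + 1) / ((r + 1 : ℕ) : ℂ) ^ s) / (Real.sqrt Real.pi : ℂ))) := by
  classical
  refine ⟨fun n => ∑ r ∈ Finset.Icc 1 n, ((Acoef n r : ℝ) : ℂ) * (χ r / (r : ℂ) ^ s), ?_, ?_⟩
  · -- Part 1 : q → 1⁻ limit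
    intro n hn
    have key : ∀ q ∈ Set.Ioo (0:ℝ) 1, Tseq α n q =
        (Real.sqrt n : ℂ) * ((2 * n).factorial : ℂ) *
          (∑ r ∈ Finset.Icc 1 n, (q:ℂ) ^ r * α r q / (gC q (n - r) * gC q (n + r)))
            / 4 ^ n := by
      intro q hq
      have hq0 : 0 < q := hq.1
      have hq1 : ((1:ℂ) - q) ≠ 0 := by
        rw [sub_ne_zero]
        exact_mod_cast (ne_of_lt hq.2).symm
      have hsum : ((1:ℂ) - q) ^ (2 * n) * betaSeq α n q
          = ∑ r ∈ Finset.Icc 1 n, (q:ℂ) ^ r * α r q / (gC q (n - r) * gC q (n + r)) := by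
        unfold betaSeq
        rw [Finset.mul_sum]
        refine Finset.sum_congr rfl fun r hr => ?_
        obtain ⟨hr1, hrn⟩ := Finset.mem_Icc.mp hr
        rw [qPoch_eq, qPoch_eq]
        have hpow : ((1:ℂ) - q) ^ (n - r) * ((1:ℂ) - q) ^ (n + r)
            = ((1:ℂ) - q) ^ (2 * n) := by
          rw [← pow_add]; congr 1; omega
        have hg1 := gC_ne_zero hq0 (n - r)
        have hg2 := gC_ne_zero hq0 (n + r)
        have hp1 : ((1:ℂ) - q) ^ (n - r) ≠ 0 := pow_ne_zero _ hq1
        have hp2 : ((1:ℂ) - q) ^ (n + r) ≠ 0 := pow_ne_zero _ hq1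
        field_simp
        rw [← hpow]
        ring
      unfold Tseq
      rw [mul_assoc, hsum]
    have hlim2 : Tendsto (fun q : ℝ => (Real.sqrt n : ℂ) * ((2 * n).factorial : ℂ) *
        (∑ r ∈ Finset.Icc 1 n, (q:ℂ) ^ r * α r q / (gC q (n - r) * gC q (n + r))) / 4 ^ n)
        (𝓝[Set.Ioo (0:ℝ) 1] 1)
        (𝓝 ((Real.sqrt n : ℂ) * ((2 * n).factorial : ℂ) *
          (∑ r ∈ Finset.Icc 1 n, (χ r / (r:ℂ) ^ s) /
            (((n - r).factorial : ℂ) * ((n + r).factorial : ℂ))) / 4 ^ n)) := by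
      apply Tendsto.div_const
      apply Tendsto.const_mul
      apply tendsto_finset_sum
      intro r hr
      obtain ⟨hr1, hrn⟩ := Finset.mem_Icc.mp hr
      have hq : Tendsto (fun q : ℝ => (q:ℂ) ^ r) (𝓝[Set.Ioo (0:ℝ) 1] 1) (𝓝 1) := by
        have := ((Complex.continuous_ofReal.pow r).tendsto 1).mono_left
          (nhdsWithin_le_nhds (s := Set.Ioo (0:ℝ) 1))
        have h' : Tendsto (fun q : ℝ => (q:ℂ) ^ r) (𝓝[Set.Ioo (0:ℝ) 1] 1)
            (𝓝 (((1:ℝ):ℂ) ^ r)) := this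
        rw [Complex.ofReal_one, one_pow] at h'
        exact h'
      have hnum := hq.mul (hlim r hr1)
      rw [one_mul] at hnum
      have hden := (gC_tendsto (n - r)).mul (gC_tendsto (n + r))
      have hdne : (((n - r).factorial : ℂ)) * ((n + r).factorial : ℂ) ≠ 0 :=
        mul_ne_zero (Nat.cast_ne_zero.mpr (Nat.factorial_ne_zero _))
          (Nat.cast_ne_zero.mpr (Nat.factorial_ne_zero _))
      exact hnum.div hden hdne
    have heq : (Real.sqrt n : ℂ) * ((2 * n).factorial : ℂ) *
          (∑ r ∈ Finset.Icc 1 n, (χ r / (r:ℂ) ^ s) /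
            (((n - r).factorial : ℂ) * ((n + r).factorial : ℂ))) / 4 ^ n
        = ∑ r ∈ Finset.Icc 1 n, ((Acoef n r : ℝ) : ℂ) * (χ r / (r : ℂ) ^ s) := by
      rw [Finset.mul_sum, Finset.sum_div]
      refine Finset.sum_congr rfl fun r _ => ?_
      unfold Acoef
      have hf1 : (((n - r).factorial : ℝ) : ℂ) ≠ 0 := by
        exact_mod_cast (Nat.cast_ne_zero (R := ℂ)).mpr (Nat.factorial_ne_zero (n - r))
      have hf2 : (((n + r).factorial : ℝ) : ℂ) ≠ 0 := by
        exact_mod_cast (Nat.cast_ne_zero (R := ℂ)).mpr (Nat.factorial_ne_zero (n + r))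
      have h4 : ((4:ℂ)) ^ n ≠ 0 := by norm_num
      push_cast
      field_simp
    rw [heq] at hlim2
    exact Tendsto.congr'
      (eventuallyEq_of_mem self_mem_nhdsWithin fun q hq => (key q hq).symm) hlim2
  · -- Part 2 : n → ∞ limit
    have hB0 : 0 ≤ B := le_trans (norm_nonneg _) (hχ 0)
    obtain ⟨M, hM⟩ : ∃ M : ℝ, ∀ n, Acoef n 0 ≤ M := by
      obtain ⟨M, hM⟩ := Acoef_zero_tendsto.bddAbove_range
      exact ⟨M, fun n => hM (Set.mem_range_self n)⟩
    have hM0 : 0 ≤ M := le_trans (Acoef_nonneg 0 0) (hM 0)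
    set g : ℕ → ℂ :=
      fun r => ((Real.sqrt Real.pi / Real.pi : ℝ) : ℂ) * (χ (r+1) / ((r+1 : ℕ) : ℂ) ^ s)
      with hgdef
    set F : ℕ → ℕ → ℂ := fun n r =>
      if r + 1 ≤ n then ((Acoef n (r+1) : ℝ) : ℂ) * (χ (r+1) / ((r+1 : ℕ) : ℂ) ^ s) else 0
      with hFdef
    have hsummable : Summable (fun r : ℕ => M * (B * ((r+1 : ℕ) : ℝ) ^ (-s.re))) := by
      apply Summable.mul_left
      apply Summable.mul_left
      have h : Summable (fun n : ℕ => (n : ℝ) ^ (-s.re)) :=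
        Real.summable_nat_rpow.mpr (by linarith)
      exact (summable_nat_add_iff 1).mpr h
    have hterm : ∀ r : ℕ, ‖χ (r+1) / ((r+1 : ℕ) : ℂ) ^ s‖ ≤ B * ((r+1 : ℕ) : ℝ) ^ (-s.re) := by
      intro r
      rw [norm_div, Complex.norm_natCast_cpow_of_pos (Nat.succ_pos r),
        Real.rpow_neg (Nat.cast_nonneg _), div_eq_mul_inv]
      exact mul_le_mul_of_nonneg_right (hχ (r+1)) (by positivity)
    have hbound : ∀ n r, ‖F n r‖ ≤ M * (B * ((r+1 : ℕ) : ℝ) ^ (-s.re)) := by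
      intro n r
      by_cases h : r + 1 ≤ n
      · simp only [hFdef, if_pos h, norm_mul, Complex.norm_real,
          Real.norm_of_nonneg (Acoef_nonneg n (r+1))]
        exact mul_le_mul (le_trans (Acoef_le_Acoef_zero h) (hM n)) (hterm r)
          (norm_nonneg _) hM0
      · simp only [hFdef, if_neg h, norm_zero]
        positivity
    have hptlim : ∀ r, Tendsto (fun n => F n r) atTop (𝓝 (g r)) := by
      intro r
      have h1 : Tendsto (fun n : ℕ => ((Acoef n (r+1) : ℝ) : ℂ)) atTop
          (𝓝 ((Real.sqrt Real.pi / Real.pi : ℝ) : ℂ)) :=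
        (Complex.continuous_ofReal.tendsto _).comp (Acoef_tendsto (r+1))
      have h2 := h1.mul_const (χ (r+1) / ((r+1 : ℕ) : ℂ) ^ s)
      apply h2.congr'
      filter_upwards [eventually_ge_atTop (r+1)] with n hn
      simp only [hFdef, if_pos hn]
    have hmain := tendsto_tsum_of_dominated_convergence hsummable hptlim
      (Filter.Eventually.of_forall hbound)
    have hAn : ∀ n : ℕ,
        (∑' r, F n r) = ∑ r ∈ Finset.Icc 1 n, ((Acoef n r : ℝ) : ℂ) * (χ r / (r : ℂ) ^ s) := by
      intro n
      rw [tsum_eq_sum (s := Finset.range n)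
        (by intro r hr; simp only [hFdef]; rw [if_neg]; simp at hr; omega)]
      rw [← Finset.Ico_add_one_right_eq_Icc, Finset.sum_Ico_eq_sum_range]
      refine Finset.sum_congr rfl fun i hi => ?_
      have hi' : i < n := Finset.mem_range.mp hi
      simp only [hFdef, if_pos (by omega : i + 1 ≤ n)]
      rw [show 1 + i = i + 1 by omega]
    have hg : (∑' r, g r)
        = (∑' r : ℕ, χ (r + 1) / ((r + 1 : ℕ) : ℂ) ^ s) / (Real.sqrt Real.pi : ℂ) := by
      rw [hgdef, tsum_mul_left]
      have hπ : ((Real.sqrt Real.pi / Real.pi : ℝ) : ℂ) = ((Real.sqrt Real.pi : ℝ) : ℂ)⁻¹ := by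
        have hne : Real.sqrt Real.pi ≠ 0 := by positivity
        rw [show Real.sqrt Real.pi / Real.pi = (Real.sqrt Real.pi)⁻¹ by
          field_simp; rw [Real.sq_sqrt Real.pi_pos.le]]
        push_cast
        ring
      rw [hπ, inv_mul_eq_div]
    rw [hg] at hmain
    exact hmain.congr hAn
end

section
/- Let s ∈ ℂ with Re(s) > 1 and let χ : ℕ → ℂ be a bounded function. Then lim_{n→∞} (√n / 4^n) Σ_{r=1}^{n} C(2n, n+r) χ(r) / r^s = (1/√π) Σ_{r=1}^{∞} χ(r) / r^s. -/
open Finset Filter Topology Real Nat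

lemma central_eq_stirling (n : ℕ) (hn : 1 ≤ n) :
    Real.sqrt n / 4 ^ n * ((2 * n).choose n : ℝ)
      = Stirling.stirlingSeq (2 * n) / (Stirling.stirlingSeq n) ^ 2 := by
  have hfact : ((2 * n).choose n : ℝ) * (n ! : ℝ) * (n ! : ℝ) = ((2 * n)! : ℝ) := by
    have := Nat.choose_mul_factorial_mul_factorial (by omega : n ≤ 2 * n)
    rw [show 2 * n - n = n by omega] at this
    exact_mod_cast congrArg (Nat.cast (R := ℝ)) this
  have hnpos : (0 : ℝ) < n := by exact_mod_cast hn
  have hf1 : (0:ℝ) < (n ! : ℝ) := by exact_mod_cast Nat.factorial_pos n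
  unfold Stirling.stirlingSeq
  push_cast
  have hs2 : Real.sqrt (2 * (2 * (n:ℝ))) = 2 * Real.sqrt n := by
    rw [show (2 : ℝ) * (2 * n) = 2^2 * n by ring, Real.sqrt_mul (by norm_num),
      Real.sqrt_sq (by norm_num)]
  rw [hs2]
  have hsq : Real.sqrt (2 * (n:ℝ)) ^ 2 = 2 * n := Real.sq_sqrt (by positivity)
  have hsn : Real.sqrt (n:ℝ) * Real.sqrt n = n := Real.mul_self_sqrt hnpos.le
  rw [← hfact]
  field_simp
  ring_nf
  have he : rexp ((n:ℝ) * 2) = rexp (n:ℝ) ^ 2 := by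
    rw [mul_comm]; exact_mod_cast Real.exp_nat_mul (n:ℝ) 2
  have h2 : Real.sqrt (2:ℝ) ^ 2 = 2 := Real.sq_sqrt (by norm_num)
  have h4 : (4:ℝ) ^ n = 2 ^ (n * 2) := by
    rw [show (4:ℝ) = 2^2 by norm_num, ← pow_mul, mul_comm]
  rw [h4, Real.sq_sqrt hnpos.le, Real.sq_sqrt (by positivity : (0:ℝ) ≤ (n:ℝ) * 2)]
  ring

lemma tendsto_sqrt_central :
    Tendsto (fun n : ℕ => Real.sqrt n / 4 ^ n * ((2 * n).choose n : ℝ)) atTop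
      (𝓝 (1 / Real.sqrt π)) := by
  have hπ : Real.sqrt π ≠ 0 := by positivity
  have h2n : Tendsto (fun n : ℕ => 2 * n) atTop atTop :=
    tendsto_atTop_atTop.mpr fun b => ⟨b, fun a ha => by omega⟩
  have h2 : Tendsto (fun n : ℕ => Stirling.stirlingSeq (2 * n)) atTop (𝓝 (Real.sqrt π)) :=
    Stirling.tendsto_stirlingSeq_sqrt_pi.comp h2n
  have h1 : Tendsto (fun n : ℕ => (Stirling.stirlingSeq n) ^ 2) atTop (𝓝 ((Real.sqrt π) ^ 2)) :=
    Stirling.tendsto_stirlingSeq_sqrt_pi.pow 2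
  have := h2.div h1 (by positivity)
  have hval : Real.sqrt π / (Real.sqrt π) ^ 2 = 1 / Real.sqrt π := by
    rw [pow_two]; field_simp
  rw [hval] at this
  refine this.congr' ?_
  filter_upwards [eventually_ge_atTop 1] with n hn
  exact (central_eq_stirling n hn).symm

lemma tendsto_sqrt_choose (r : ℕ) :
    Tendsto (fun n : ℕ => Real.sqrt n / 4 ^ n * ((2 * n).choose (n + r) : ℝ)) atTop
      (𝓝 (1 / Real.sqrt π)) := by
  induction r with
  | zero => simpa using tendsto_sqrt_central
  | succ r ih =>
    have hreal : Tendsto (fun x : ℝ => (x - r) / (x + r + 1)) atTop (𝓝 1) := by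
      have hinv : Tendsto (fun x : ℝ => (x + r + 1)⁻¹) atTop (𝓝 0) := by
        have h := tendsto_atTop_add_const_right atTop ((r:ℝ) + 1) (tendsto_id (α := ℝ))
        simpa [Function.comp_def, add_assoc] using tendsto_inv_atTop_zero.comp h
      have key : Tendsto (fun x : ℝ => 1 - (2 * r + 1) * (x + r + 1)⁻¹) atTop (𝓝 1) := by
        simpa using tendsto_const_nhds.sub (hinv.const_mul (2 * (r:ℝ) + 1))
      refine key.congr' ?_
      filter_upwards [eventually_gt_atTop 0] with x hx
      have hx1 : x + r + 1 ≠ 0 := by positivity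
      rw [eq_div_iff hx1, sub_mul, mul_assoc, inv_mul_cancel₀ hx1]
      ring
    have hr : Tendsto (fun n : ℕ => ((n:ℝ) - r) / ((n:ℝ) + r + 1)) atTop (𝓝 1) :=
      hreal.comp tendsto_natCast_atTop_atTop
    have := ih.mul hr
    rw [mul_one] at this
    refine this.congr' ?_
    filter_upwards [eventually_ge_atTop (r + 1)] with n hn
    have hkey : ((2 * n).choose (n + r + 1) : ℝ) * ((n:ℝ) + r + 1)
        = ((2 * n).choose (n + r) : ℝ) * ((n:ℝ) - r) := by
      have h := Nat.choose_succ_right_eq (2 * n) (n + r)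
      rw [show 2 * n - (n + r) = n - r by omega] at h
      have := congrArg (Nat.cast (R := ℝ)) h
      push_cast [Nat.cast_sub (by omega : r ≤ n)] at this
      convert this using 2 <;> push_cast <;> ring
    have hd : ((n:ℝ) + r + 1) ≠ 0 := by positivity
    have : ((2 * n).choose (n + (r+1)) : ℝ)
        = ((2 * n).choose (n + r) : ℝ) * (((n:ℝ) - r) / ((n:ℝ) + r + 1)) := by
      rw [show n + (r + 1) = n + r + 1 by omega]
      field_simp
      linarith [hkey]
    rw [this]
    ring

/-- For `Re(s) > 1` and `χ` bounded,
`(√n/4^n) Σ_{r=1}^n C(2n,n+r) χ(r)/r^s → (1/√π) Σ_{r=1}^∞ χ(r)/r^s`. -/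
theorem tendsto_sqrt_div_four_pow_mul_choose_sum (s : ℂ) (hs : 1 < s.re)
    (χ : ℕ → ℂ) (B : ℝ) (hχ : ∀ r : ℕ, ‖χ r‖ ≤ B) :
    Tendsto (fun n : ℕ =>
        ((Real.sqrt n / 4 ^ n : ℝ) : ℂ) *
          ∑ r ∈ Finset.Icc 1 n, ((2 * n).choose (n + r) : ℂ) * χ r / (r : ℂ) ^ s)
      atTop
      (𝓝 ((1 / (Real.sqrt Real.pi : ℂ)) * ∑' r : ℕ, χ (r + 1) / ((r + 1 : ℕ) : ℂ) ^ s)) := by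
  classical
  set c : ℕ → ℝ := fun n => Real.sqrt n / 4 ^ n with hc
  set g : ℕ → ℂ := fun k => χ (1 + k) / ((1 + k : ℕ) : ℂ) ^ s with hg
  set F : ℕ → ℕ → ℂ := fun n k =>
    if k < n then (c n : ℂ) * (((2 * n).choose (n + (1 + k)) : ℂ) * χ (1 + k)
      / ((1 + k : ℕ) : ℂ) ^ s) else 0 with hF
  have hcnn : ∀ n, 0 ≤ c n := fun n => by positivity
  -- bound on c n * central binomial
  obtain ⟨M, hM⟩ := (tendsto_sqrt_choose 0).bddAbove_range
  have hM' : ∀ n : ℕ, c n * ((2 * n).choose n : ℝ) ≤ M := by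
    intro n
    have := hM (Set.mem_range_self (f := fun n : ℕ => Real.sqrt n / 4 ^ n *
      ((2 * n).choose (n + 0) : ℝ)) n)
    simpa using this
  set M' : ℝ := max M 0 with hM'def
  set B' : ℝ := max B 0 with hB'def
  -- the bound function
  set bound : ℕ → ℝ := fun k => M' * B' * (1 / ((1 + k : ℕ) : ℝ) ^ s.re) with hbound
  have h_sum : Summable bound := by
    have h0 : Summable (fun k : ℕ => 1 / ((k : ℝ) ^ s.re)) :=
      (Real.summable_one_div_nat_rpow).mpr (by linarith)
    have h1 : Summable (fun k : ℕ => 1 / (((1 + k : ℕ) : ℝ) ^ s.re)) := by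
      have := h0.comp_injective (Nat.succ_injective)
      refine this.congr fun k => ?_
      simp [Nat.succ_eq_add_one, Nat.add_comm]
    exact h1.mul_left _
  -- norm computation
  have hnorm : ∀ n k : ℕ, ‖F n k‖ ≤ bound k := by
    intro n k
    have hpos : (0:ℝ) < ((1 + k : ℕ) : ℝ) ^ s.re :=
      Real.rpow_pos_of_pos (by exact_mod_cast Nat.cast_pos.mpr (by omega : 0 < 1 + k)) _
    by_cases hk : k < n
    · rw [hF]
      simp only [hk, if_pos]
      rw [norm_mul, norm_div, norm_mul]
      rw [Complex.norm_real, Real.norm_of_nonneg (hcnn n),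
        Complex.norm_natCast_cpow_of_pos (by omega), Complex.norm_natCast]
      have hchoose : ((2 * n).choose (n + (1 + k)) : ℝ) ≤ ((2 * n).choose n : ℝ) := by
        exact_mod_cast (Nat.choose_le_middle (n + (1 + k)) (2 * n)).trans
          (le_of_eq (by rw [Nat.mul_div_cancel_left n (by norm_num)]))
      have hcC : c n * ((2 * n).choose (n + (1 + k)) : ℝ) ≤ M' :=
        le_trans (by nlinarith [hcnn n, hM' n]) (le_max_left M 0)
      have hχ' : ‖χ (1 + k)‖ ≤ B' := le_trans (hχ _) (le_max_left B 0)
      calc c n * (((2 * n).choose (n + (1 + k)) : ℝ) * ‖χ (1 + k)‖ / ((1 + k : ℕ) : ℝ) ^ s.re)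
          = (c n * ((2 * n).choose (n + (1 + k)) : ℝ)) * ‖χ (1 + k)‖
            / ((1 + k : ℕ) : ℝ) ^ s.re := by ring
        _ ≤ M' * B' / ((1 + k : ℕ) : ℝ) ^ s.re := by
            gcongr
        _ = bound k := by rw [hbound]; ring
    · rw [hF]
      simp only [hk, if_neg, if_false, norm_zero]
      have : (0:ℝ) ≤ M' * B' := mul_nonneg (le_max_right M 0) (le_max_right B 0)
      positivity
  -- pointwise limit
  have h_tend : ∀ k : ℕ, Tendsto (F · k) atTop (𝓝 ((1 / (Real.sqrt Real.pi : ℂ)) * g k)) := by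
    intro k
    have hre : Tendsto (fun n : ℕ => ((c n * ((2 * n).choose (n + (1 + k)) : ℝ) : ℝ) : ℂ))
        atTop (𝓝 ((1 / Real.sqrt Real.pi : ℝ) : ℂ)) :=
      (Complex.continuous_ofReal.tendsto _).comp (tendsto_sqrt_choose (1 + k))
    have := hre.mul_const (g k)
    have hval : ((1 / Real.sqrt Real.pi : ℝ) : ℂ) * g k
        = (1 / (Real.sqrt Real.pi : ℂ)) * g k := by push_cast; ring
    rw [hval] at this
    refine this.congr' ?_
    filter_upwards [eventually_gt_atTop k] with n hn
    rw [hF]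
    simp only [hn, if_pos]
    rw [hg]
    push_cast
    ring
  have H := tendsto_tsum_of_dominated_convergence h_sum h_tend
    (Filter.Eventually.of_forall fun n => hnorm n)
  have htsum : (∑' k, (1 / (Real.sqrt Real.pi : ℂ)) * g k)
      = (1 / (Real.sqrt Real.pi : ℂ)) * ∑' r : ℕ, χ (r + 1) / ((r + 1 : ℕ) : ℂ) ^ s := by
    rw [tsum_mul_left]
    congr 1
    exact tsum_congr fun k => by rw [hg]; simp [Nat.add_comm]
  rw [htsum] at H
  refine H.congr fun n => ?_
  -- ∑' k, F n k = c n * ∑ r in Icc 1 n, ...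
  rw [tsum_eq_sum (s := Finset.range n) (fun k hk => by
    simp only [hF]
    simp only [Finset.mem_range, not_lt] at hk
    exact if_neg (by omega))]
  rw [← Finset.Ico_add_one_right_eq_Icc, Finset.sum_Ico_eq_sum_range]
  rw [Finset.mul_sum]
  refine Finset.sum_congr rfl fun k hk => ?_
  simp only [hF]
  rw [if_pos (by simpa using Finset.mem_range.mp hk)]
end

section
/- Let s ∈ ℂ with Re(s) > 1 and let χ : ℕ → ℂ be a bounded function. Define L_n^χ(s) = Σ_{r=1}^{n} χ(r) / ((n-r)! (n+r)! r^s). Then lim_{n→∞} √n · (2n)! · L_n^χ(s) / 4^n = L(s,χ)/√π, where L(s,χ) = Σ_{r=1}^{∞} χ(r)/r^s. -/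
open Finset Filter Topology

noncomputable def wAux (n r : ℕ) : ℝ := Real.sqrt n * ((2 * n).choose (n + r)) / 4 ^ n

lemma wAux_nonneg (n r : ℕ) : 0 ≤ wAux n r := by unfold wAux; positivity

lemma wAux_le (n r : ℕ) : wAux n r ≤ wAux n 0 := by
  unfold wAux
  gcongr
  exact_mod_cast (Nat.choose_le_middle (n + r) (2 * n)).trans_eq (by congr 1; omega)

lemma wAux_cast {n r : ℕ} (h : r ≤ n) :
    wAux n r = Real.sqrt n * ((2 * n).factorial : ℝ) /
      (4 ^ n * (((n - r).factorial : ℝ) * ((n + r).factorial : ℝ))) := by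
  unfold wAux
  rw [Nat.cast_choose ℝ (by omega : n + r ≤ 2 * n), show 2 * n - (n + r) = n - r by omega]
  ring

lemma asc_prod (n : ℕ) : ∀ r : ℕ, (n+1).ascFactorial r = ∏ i ∈ range r, (n+1+i)
  | 0 => by simp
  | (r+1) => by rw [Nat.ascFactorial_succ, prod_range_succ, asc_prod n r]; ring


open Real in
lemma tendsto_wAux_zero : Tendsto (fun n : ℕ => wAux n 0) atTop (𝓝 (Real.sqrt Real.pi)⁻¹) := by
  have hq : ∀ n : ℕ, (0:ℝ) < 4 ^ n * ((n.factorial : ℝ))^2 / ((2*n).factorial : ℝ) := by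
    intro n; positivity
  have hWid : ∀ n : ℕ, Real.Wallis.W n
      = (4 ^ n * ((n.factorial : ℝ))^2 / ((2*n).factorial : ℝ))^2 / (2*n+1) := by
    intro n
    have h16 : (2:ℝ)^(4*n) = ((4:ℝ)^n)^2 := by
      rw [← pow_mul, show 4*n = 2*(n*2) by ring, pow_mul]; norm_num
    rw [Real.Wallis.W_eq_factorial_ratio, h16, div_pow]
    have h2 : ((2*n).factorial : ℝ) ≠ 0 := by positivity
    field_simp
  have hu : Tendsto (fun n : ℕ => Real.sqrt (Real.Wallis.W n)) atTop (𝓝 (Real.sqrt (π/2))) :=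
    (Real.continuous_sqrt.tendsto _).comp Real.Wallis.tendsto_W_nhds_pi_div_two
  have h2 : Tendsto (fun n : ℕ => ((n:ℝ)/(2*n+1))) atTop (𝓝 (1/2)) := by
    have hb : Tendsto (fun n : ℕ => (2 + ((n:ℝ))⁻¹)) atTop (𝓝 2) := by
      simpa using (tendsto_const_nhds (x := (2:ℝ)) (f := atTop)).add
        tendsto_inv_atTop_nhds_zero_nat
    have := hb.inv₀ (by norm_num)
    rw [show ((2:ℝ))⁻¹ = 1/2 by norm_num] at this
    apply this.congr'
    filter_upwards [eventually_ge_atTop 1] with n hn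
    have hn0 : (n:ℝ) ≠ 0 := by positivity
    field_simp
  have hv : Tendsto (fun n : ℕ => Real.sqrt ((n:ℝ)/(2*n+1))) atTop (𝓝 (Real.sqrt (1/2))) :=
    (Real.continuous_sqrt.tendsto _).comp h2
  have hlim : Tendsto (fun n : ℕ => Real.sqrt ((n:ℝ)/(2*n+1)) * (Real.sqrt (Real.Wallis.W n))⁻¹)
      atTop (𝓝 (Real.sqrt (1/2) * (Real.sqrt (π/2))⁻¹)) :=
    hv.mul (hu.inv₀ (by positivity))
  have hval : Real.sqrt (1/2) * (Real.sqrt (π/2))⁻¹ = (Real.sqrt π)⁻¹ := by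
    rw [← Real.sqrt_inv, ← Real.sqrt_mul (by norm_num), ← Real.sqrt_inv]
    congr 1
    rw [mul_inv_eq_iff_eq_mul₀ (by positivity)]
    field_simp
  rw [hval] at hlim
  apply hlim.congr'
  filter_upwards [eventually_ge_atTop 1] with n hn
  have hn0 : (0:ℝ) < n := by exact_mod_cast hn
  set q : ℝ := 4 ^ n * ((n.factorial : ℝ))^2 / ((2*n).factorial : ℝ) with hqdef
  have hqpos : 0 < q := hq n
  have hsq : Real.sqrt (Real.Wallis.W n) = q / Real.sqrt (2*n+1) := by
    rw [hWid n, Real.sqrt_div (sq_nonneg q), Real.sqrt_sq hqpos.le]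
  have h21 : (0:ℝ) < 2*(n:ℝ)+1 := by positivity
  rw [hsq, Real.sqrt_div hn0.le, wAux_cast (Nat.zero_le n)]
  simp only [Nat.sub_zero, Nat.add_zero]
  rw [inv_div, div_mul_div_comm, hqdef]
  have hs21 : Real.sqrt (2*(n:ℝ)+1) ≠ 0 := by positivity
  have hf1 : ((n.factorial : ℝ)) ≠ 0 := by positivity
  have hf2 : (((2*n).factorial : ℝ)) ≠ 0 := by positivity
  field_simp

open Real in
lemma tendsto_wAux (r : ℕ) : Tendsto (fun n : ℕ => wAux n r) atTop (𝓝 (Real.sqrt Real.pi)⁻¹) := by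
  have hP : Tendsto (fun n : ℕ => ∏ i ∈ range r, (((n:ℝ) - i)/((n:ℝ)+1+i))) atTop (𝓝 1) := by
    have : Tendsto (fun n : ℕ => ∏ i ∈ range r, (((n:ℝ) - i)/((n:ℝ)+1+i))) atTop
        (𝓝 (∏ _i ∈ range r, (1:ℝ))) := by
      apply tendsto_finset_prod
      intro i _
      have hden : Tendsto (fun n : ℕ => ((n:ℝ)+1+i)) atTop atTop :=
        tendsto_atTop_add_const_right _ _ (tendsto_atTop_add_const_right _ 1
          tendsto_natCast_atTop_atTop)
      have h0 : Tendsto (fun n : ℕ => (2*(i:ℝ)+1)/((n:ℝ)+1+i)) atTop (𝓝 0) :=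
        Tendsto.div_atTop tendsto_const_nhds hden
      have h1 : Tendsto (fun n : ℕ => 1 - (2*(i:ℝ)+1)/((n:ℝ)+1+i)) atTop (𝓝 1) := by
        simpa using (tendsto_const_nhds (x := (1:ℝ)) (f := atTop)).sub h0
      apply h1.congr
      intro n
      have hne : ((n:ℝ)+1+i) ≠ 0 := by positivity
      field_simp
      ring
    simpa using this
  have := (tendsto_wAux_zero.mul hP)
  rw [mul_one] at this
  apply this.congr'
  filter_upwards [eventually_ge_atTop r] with n hn
  set Dn : ℝ := ∏ i ∈ range r, ((n:ℝ) - i) with hDn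
  set An : ℝ := ∏ i ∈ range r, ((n:ℝ)+1+i) with hAn
  have hD : (((n-r).factorial : ℝ)) * Dn = (n.factorial : ℝ) := by
    have h1 := Nat.factorial_mul_descFactorial hn
    have h2 : ((n.descFactorial r : ℝ)) = Dn := by
      rw [Nat.descFactorial_eq_prod_range, Nat.cast_prod, hDn]
      apply prod_congr rfl
      intro i hi
      have : i ≤ n := le_trans (le_of_lt (mem_range.mp hi)) hn
      push_cast [this]
      ring
    calc (((n-r).factorial : ℝ)) * Dn = (((n - r).factorial * n.descFactorial r : ℕ) : ℝ) := by
          push_cast [h2]; ring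
      _ = _ := by rw [h1]
  have hA : (n.factorial : ℝ) * An = ((n+r).factorial : ℝ) := by
    have h1 := Nat.factorial_mul_ascFactorial n r
    have h2 : (((n+1).ascFactorial r : ℝ)) = An := by
      rw [asc_prod, Nat.cast_prod, hAn]
      apply prod_congr rfl
      intro i _
      push_cast
      ring
    calc (n.factorial : ℝ) * An = ((n.factorial * (n+1).ascFactorial r : ℕ) : ℝ) := by
          push_cast [h2]; ring
      _ = _ := by rw [h1]
  have hprod : ∏ i ∈ range r, (((n:ℝ) - i)/((n:ℝ)+1+i)) = Dn / An := by
    rw [prod_div_distrib]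
  rw [hprod, wAux_cast (Nat.zero_le n), wAux_cast hn]
  simp only [Nat.sub_zero, Nat.add_zero]
  have hDpos : 0 < Dn := by
    rw [hDn]; apply prod_pos; intro i hi
    have h1 : i < r := mem_range.mp hi
    have : (i:ℝ) < n := by exact_mod_cast lt_of_lt_of_le h1 hn
    linarith
  have hApos : 0 < An := by
    rw [hAn]; apply prod_pos; intro i _; positivity
  have key : (n.factorial : ℝ) * (n.factorial : ℝ) * An
      = ((n-r).factorial : ℝ) * ((n+r).factorial : ℝ) * Dn := by
    calc (n.factorial : ℝ) * (n.factorial : ℝ) * An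
        = (n.factorial : ℝ) * ((n.factorial : ℝ) * An) := by ring
      _ = (n.factorial : ℝ) * ((n+r).factorial : ℝ) := by rw [hA]
      _ = (((n-r).factorial : ℝ)) * Dn * ((n+r).factorial : ℝ) := by rw [hD]
      _ = _ := by ring
  have hf1 : ((n.factorial : ℝ)) ≠ 0 := by positivity
  have hf2 : (((n-r).factorial : ℝ)) ≠ 0 := by positivity
  have hf3 : (((n+r).factorial : ℝ)) ≠ 0 := by positivity
  have h4 : ((4:ℝ)^n) ≠ 0 := by positivity
  rw [div_mul_div_comm, div_eq_div_iff (by positivity) (by positivity)]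
  linear_combination (-1 * Real.sqrt n * (((2*n).factorial : ℝ)) * 4 ^ n) * key

/-- For `Re(s) > 1` and `χ` bounded, with `L_n^χ(s) = Σ_{r=1}^n χ(r)/((n-r)!(n+r)! r^s)`,
we have `√n (2n)! L_n^χ(s) / 4^n → L(s,χ)/√π`. -/
theorem tendsto_factorial_weighted_L_sum (s : ℂ) (hs : 1 < s.re)
    (χ : ℕ → ℂ) (B : ℝ) (hχ : ∀ r : ℕ, ‖χ r‖ ≤ B) :
    Tendsto (fun n : ℕ =>
        ((Real.sqrt n : ℝ) : ℂ) * ((2 * n).factorial : ℂ) / 4 ^ n *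
          ∑ r ∈ Finset.Icc 1 n,
            χ r / (((n - r).factorial : ℂ) * ((n + r).factorial : ℂ) * (r : ℂ) ^ s))
      atTop
      (𝓝 ((∑' r : ℕ, χ (r + 1) / ((r + 1 : ℕ) : ℂ) ^ s) / (Real.sqrt Real.pi : ℂ))) := by
  obtain ⟨C, hC⟩ : ∃ C : ℝ, ∀ n, wAux n 0 ≤ C := by
    obtain ⟨C, hC⟩ := (tendsto_wAux 0).bddAbove_range
    exact ⟨C, fun n => hC (Set.mem_range_self n)⟩
  set B' := max B 0 with hB'def
  set C' := max C 0 with hC'def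
  have hB' : ∀ r, ‖χ r‖ ≤ B' := fun r => (hχ r).trans (le_max_left _ _)
  have hB'0 : 0 ≤ B' := le_max_right _ _
  have hC'0 : 0 ≤ C' := le_max_right _ _
  have hCC : ∀ n r, wAux n r ≤ C' :=
    fun n r => (wAux_le n r).trans ((hC n).trans (le_max_left _ _))
  set g : ℕ → ℂ := fun k => ((Real.sqrt Real.pi : ℝ) : ℂ)⁻¹ * (χ (k+1) / ((k+1 : ℕ) : ℂ) ^ s)
    with hgdef
  set f : ℕ → ℕ → ℂ := fun n k =>
    if k + 1 ≤ n then ((wAux n (k+1) : ℝ) : ℂ) * (χ (k+1) / ((k+1 : ℕ) : ℂ) ^ s) else 0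
    with hfdef
  have hmain : Tendsto (fun n => ∑' k, f n k) atTop (𝓝 (∑' k, g k)) := by
    apply tendsto_tsum_of_dominated_convergence
      (bound := fun k : ℕ => C' * B' * (1 / ((k+1 : ℕ) : ℝ) ^ s.re))
    · apply Summable.mul_left
      have h1 : Summable (fun n : ℕ => 1 / (n : ℝ) ^ s.re) :=
        Real.summable_one_div_nat_rpow.mpr hs
      exact_mod_cast (summable_nat_add_iff 1).mpr h1
    · intro k
      have h1 : Tendsto (fun n : ℕ => ((wAux n (k+1) : ℝ) : ℂ)) atTop
          (𝓝 (((Real.sqrt Real.pi)⁻¹ : ℝ) : ℂ)) :=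
        (Complex.continuous_ofReal.tendsto _).comp (tendsto_wAux (k+1))
      have h2 := h1.mul_const (χ (k+1) / ((k+1 : ℕ) : ℂ) ^ s)
      have h3 : g k = (((Real.sqrt Real.pi)⁻¹ : ℝ) : ℂ) * (χ (k+1) / ((k+1 : ℕ) : ℂ) ^ s) := by
        rw [hgdef]; push_cast; ring
      rw [h3]
      apply h2.congr'
      filter_upwards [eventually_ge_atTop (k+1)] with n hn
      simp only [hfdef, if_pos hn]
    · filter_upwards with n k
      have hknorm : ‖((k+1 : ℕ) : ℂ) ^ s‖ = ((k+1 : ℕ) : ℝ) ^ s.re :=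
        Complex.norm_natCast_cpow_of_pos (Nat.succ_pos k) s
      have hkpos : (0:ℝ) < ((k+1 : ℕ) : ℝ) ^ s.re :=
        Real.rpow_pos_of_pos (by positivity) _
      by_cases hk : k + 1 ≤ n
      · simp only [hfdef, if_pos hk, norm_mul, norm_div, Complex.norm_real, hknorm]
        rw [Real.norm_eq_abs, abs_of_nonneg (wAux_nonneg n (k+1))]
        calc wAux n (k+1) * (‖χ (k+1)‖ / ((k+1 : ℕ) : ℝ) ^ s.re)
            ≤ C' * (B' / ((k+1 : ℕ) : ℝ) ^ s.re) :=
              mul_le_mul (hCC n (k+1)) (by gcongr; exact hB' (k+1)) (by positivity) hC'0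
          _ = C' * B' * (1 / ((k+1 : ℕ) : ℝ) ^ s.re) := by ring
      · simp only [hfdef, if_neg hk, norm_zero]
        positivity
  have hval : ∀ n : ℕ,
      ((Real.sqrt n : ℝ) : ℂ) * ((2 * n).factorial : ℂ) / 4 ^ n *
          ∑ r ∈ Finset.Icc 1 n,
            χ r / (((n - r).factorial : ℂ) * ((n + r).factorial : ℂ) * (r : ℂ) ^ s)
      = ∑' k, f n k := by
    intro n
    rw [tsum_eq_sum (s := Finset.range n) (f := fun k => f n k) (by
      intro k hk
      have hk' : ¬ (k + 1 ≤ n) := fun h => hk (mem_range.mpr h)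
      simp only [hfdef, if_neg hk'])]
    rw [Finset.mul_sum, ← Finset.Ico_add_one_right_eq_Icc, Finset.sum_Ico_eq_sum_range]
    norm_num
    apply Finset.sum_congr rfl
    intro k hk
    have hk1 : k + 1 ≤ n := mem_range.mp hk
    rw [show 1 + k = k + 1 from Nat.add_comm 1 k]
    simp only [hfdef, if_pos hk1]
    rw [wAux_cast hk1]
    push_cast
    rw [div_mul_div_comm, div_mul_div_comm]
    ring
  have hgoal : (∑' k, g k)
      = (∑' r : ℕ, χ (r + 1) / ((r + 1 : ℕ) : ℂ) ^ s) / (Real.sqrt Real.pi : ℂ) := by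
    rw [hgdef, tsum_mul_left, div_eq_mul_inv, mul_comm]
  rw [← hgoal]
  exact hmain.congr (fun n => (hval n).symm)
end

section
/- Let s ∈ ℂ with Re(s) > 1. Then lim_{n→∞} √n · (2n)! / 4^n · Σ_{r=1}^{n} 1 / ((n-r)! (n+r)! r^s) = ζ(s)/√π, where ζ is the Riemann zeta function. -/
open Finset Filter Topology

noncomputable def Wseq (n : ℕ) : ℝ := Real.sqrt n * (Nat.centralBinom n) / 4 ^ n

lemma Wseq_eq (n : ℕ) (hn : 1 ≤ n) :
    Wseq n = Stirling.stirlingSeq (2 * n) / (Stirling.stirlingSeq n) ^ 2 := by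
  have hn0 : (0:ℝ) < n := by exact_mod_cast hn
  have hs2 : Real.sqrt (2 * (2 * n) : ℝ) = 2 * Real.sqrt n := by
    rw [show (2 * (2 * n) : ℝ) = 4 * n by ring, Real.sqrt_mul (by norm_num) (n:ℝ),
      show (4:ℝ) = 2^2 by norm_num, Real.sqrt_sq (by norm_num)]
  have hsn : Real.sqrt (2 * n : ℝ) ^ 2 = 2 * n := Real.sq_sqrt (by positivity)
  have hcb : (Nat.centralBinom n : ℝ) * (n.factorial : ℝ) * (n.factorial : ℝ)
      = ((2*n).factorial : ℝ) := by
    have := Nat.choose_mul_factorial_mul_factorial (show n ≤ 2*n by omega)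
    rw [Nat.centralBinom]
    rw [show 2*n - n = n by omega] at this
    exact_mod_cast this
  have he : (0:ℝ) < Real.exp 1 := Real.exp_pos 1
  have hsq : (0:ℝ) < Real.sqrt n := Real.sqrt_pos.mpr hn0
  have hfac : (0:ℝ) < (n.factorial : ℝ) := by exact_mod_cast n.factorial_pos
  have hq : (0:ℝ) < ((n:ℝ) / Real.exp 1) ^ n := by positivity
  have hpow : (((2*n : ℕ):ℝ) / Real.exp 1) ^ (2 * n)
      = 4 ^ n * (((n:ℝ) / Real.exp 1) ^ n) ^ 2 := by
    push_cast
    rw [show (2 * (n:ℝ)) / Real.exp 1 = 2 * ((n:ℝ)/Real.exp 1) by ring, mul_pow,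
      show (2:ℝ)^(2*n) = 4^n by rw [pow_mul]; norm_num,
      show 2*n = n*2 by ring, pow_mul]
  rw [Stirling.stirlingSeq, Stirling.stirlingSeq, Wseq, hpow]
  push_cast
  rw [hs2]
  set q := ((n:ℝ) / Real.exp 1) ^ n
  have h4 : (0:ℝ) < (4:ℝ)^n := by positivity
  have hs2n : (0:ℝ) < Real.sqrt (2 * n : ℝ) := Real.sqrt_pos.mpr (by positivity)
  field_simp
  have ha : Real.sqrt n ^ 2 = (n:ℝ) := Real.sq_sqrt hn0.le
  have hb : Real.sqrt 2 ^ 2 = (2:ℝ) := Real.sq_sqrt (by norm_num)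
  linear_combination (2*(n.centralBinom:ℝ)*(n.factorial:ℝ)^2) * ha - ((2*n).factorial:ℝ) * hsn + (2*(n:ℝ)) * hcb

lemma Wseq_tendsto : Tendsto Wseq atTop (𝓝 (1 / Real.sqrt Real.pi)) := by
  have h2 : Tendsto (fun n : ℕ => 2 * n) atTop atTop :=
    tendsto_atTop_mono (fun n : ℕ => by omega : ∀ n : ℕ, n ≤ 2 * n) tendsto_id
  have hA : Tendsto (fun n : ℕ => Stirling.stirlingSeq (2 * n)) atTop
      (𝓝 (Real.sqrt Real.pi)) := Stirling.tendsto_stirlingSeq_sqrt_pi.comp h2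
  have hB : Tendsto (fun n : ℕ => (Stirling.stirlingSeq n) ^ 2) atTop
      (𝓝 (Real.sqrt Real.pi ^ 2)) := Stirling.tendsto_stirlingSeq_sqrt_pi.pow 2
  have hpi : Real.sqrt Real.pi ^ 2 = Real.pi := Real.sq_sqrt Real.pi_pos.le
  have hne : Real.sqrt Real.pi ^ 2 ≠ 0 := by rw [hpi]; exact Real.pi_ne_zero
  have := hA.div hB hne
  rw [show Real.sqrt Real.pi / Real.sqrt Real.pi ^ 2 = 1 / Real.sqrt Real.pi by
    rw [sq]
    rw [div_mul_eq_div_div, div_self (by positivity : Real.sqrt Real.pi ≠ 0)]] at this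
  apply this.congr'
  filter_upwards [eventually_ge_atTop 1] with n hn
  exact (Wseq_eq n hn).symm

lemma factor_tendsto (c d : ℝ) :
    Tendsto (fun n : ℕ => ((n:ℝ) - c) / ((n:ℝ) + d)) atTop (𝓝 1) := by
  have h0 : Tendsto (fun n : ℕ => (c + d) / ((n:ℝ) + d)) atTop (𝓝 0) :=
    Tendsto.div_atTop tendsto_const_nhds
      (tendsto_atTop_add_const_right _ d tendsto_natCast_atTop_atTop)
  have h1 : Tendsto (fun n : ℕ => 1 - (c + d) / ((n:ℝ) + d)) atTop (𝓝 (1 - 0)) :=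
    tendsto_const_nhds.sub h0
  rw [sub_zero] at h1
  apply h1.congr'
  filter_upwards [(tendsto_natCast_atTop_atTop (R := ℝ)).eventually_ge_atTop (|d| + 1)] with n hn
  have hd : (n:ℝ) + d ≠ 0 := by
    have h2 := neg_abs_le d
    nlinarith
  field_simp
  ring

noncomputable def Cfun (n r : ℕ) : ℝ :=
  Real.sqrt n * (2 * n).factorial /
    ((n - r).factorial * (n + r).factorial * 4 ^ n)

lemma Cfun_nonneg (n r : ℕ) : 0 ≤ Cfun n r := by
  unfold Cfun; positivity

lemma Cfun_le (n r : ℕ) (h : r ≤ n) : Cfun n r ≤ Wseq n := by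
  unfold Cfun Wseq
  have hkey : ((2*n).factorial : ℝ)
      = ((2*n).choose (n + r) : ℝ) * ((n - r).factorial : ℝ) * ((n + r).factorial : ℝ) := by
    have h1 : n + r ≤ 2 * n := by omega
    have := Nat.choose_mul_factorial_mul_factorial h1
    rw [show 2*n - (n+r) = n - r by omega] at this
    rw [mul_right_comm]
    exact_mod_cast this.symm
  rw [hkey]
  have hch : ((2*n).choose (n + r) : ℝ) ≤ (Nat.centralBinom n : ℝ) := by
    exact_mod_cast Nat.choose_le_centralBinom (n + r) n
  have h1 : (0:ℝ) < ((n - r).factorial : ℝ) := by exact_mod_cast (n-r).factorial_pos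
  have h2 : (0:ℝ) < ((n + r).factorial : ℝ) := by exact_mod_cast (n+r).factorial_pos
  have h4 : (0:ℝ) < (4:ℝ) ^ n := by positivity
  rw [div_le_div_iff₀ (by positivity) (by positivity)]
  have hsq : (0:ℝ) ≤ Real.sqrt n := Real.sqrt_nonneg _
  nlinarith [mul_le_mul_of_nonneg_left hch
    (show (0:ℝ) ≤ Real.sqrt n * (((n-r).factorial:ℝ) * ((n+r).factorial:ℝ) * 4^n) by positivity)]

lemma Cfun_eq (n r : ℕ) (h : r ≤ n) :
    Cfun n r = Wseq n * ∏ j ∈ range r, (((n:ℝ) - j) / ((n:ℝ) + ((r:ℝ) - j))) := by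
  have hd1 : ((n - r).factorial : ℝ) * (n.descFactorial r : ℝ) = (n.factorial : ℝ) := by
    exact_mod_cast Nat.factorial_mul_descFactorial h
  have hd2 : (n.factorial : ℝ) * ((n + r).descFactorial r : ℝ) = ((n + r).factorial : ℝ) := by
    have := Nat.factorial_mul_descFactorial (show r ≤ n + r by omega)
    rw [show n + r - r = n by omega] at this
    exact_mod_cast this
  have hp1 : (n.descFactorial r : ℝ) = ∏ j ∈ range r, ((n:ℝ) - j) := by
    rw [Nat.descFactorial_eq_prod_range]
    push_cast [Nat.cast_prod]
    refine Finset.prod_congr rfl fun j hj => ?_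
    have hjr := Finset.mem_range.mp hj
    rw [Nat.cast_sub (by omega : j ≤ n)]
  have hp2 : (((n + r).descFactorial r : ℝ)) = ∏ j ∈ range r, ((n:ℝ) + ((r:ℝ) - j)) := by
    rw [Nat.descFactorial_eq_prod_range]
    push_cast [Nat.cast_prod]
    refine Finset.prod_congr rfl fun j hj => ?_
    have hjr := Finset.mem_range.mp hj
    rw [Nat.cast_sub (by omega : j ≤ n + r)]
    push_cast
    ring
  have hcb : (Nat.centralBinom n : ℝ) * (n.factorial : ℝ) * (n.factorial : ℝ)
      = ((2*n).factorial : ℝ) := by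
    have h0 := Nat.choose_mul_factorial_mul_factorial (show n ≤ 2*n by omega)
    rw [show 2*n - n = n by omega] at h0
    rw [Nat.centralBinom]
    exact_mod_cast h0
  unfold Cfun Wseq
  rw [Finset.prod_div_distrib, ← hp1, ← hp2]
  have h1 : (0:ℝ) < ((n - r).factorial : ℝ) := by exact_mod_cast (n-r).factorial_pos
  have h2 : (0:ℝ) < ((n + r).factorial : ℝ) := by exact_mod_cast (n+r).factorial_pos
  have h3 : (0:ℝ) < ((n + r).descFactorial r : ℝ) := by
    have : (n + r).descFactorial r ≠ 0 := fun h0 =>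
      absurd (Nat.descFactorial_eq_zero_iff_lt.mp h0) (by omega)
    exact_mod_cast Nat.pos_of_ne_zero this
  have h4 : (0:ℝ) < (4:ℝ) ^ n := by positivity
  rw [div_mul_div_comm, div_eq_div_iff (by positivity) (by positivity)]
  linear_combination (-(Real.sqrt n * 4^n * (((n+r).descFactorial r : ℝ)))) * hcb
    + (-(Real.sqrt n * 4^n * (Nat.centralBinom n : ℝ) * ((n+r).factorial : ℝ))) * hd1
    + (Real.sqrt n * 4^n * (Nat.centralBinom n : ℝ) * (n.factorial : ℝ)) * hd2

lemma Cfun_tendsto (r : ℕ) :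
    Tendsto (fun n => Cfun n r) atTop (𝓝 (1 / Real.sqrt Real.pi)) := by
  have hP : Tendsto (fun n : ℕ => ∏ j ∈ range r, (((n:ℝ) - j) / ((n:ℝ) + ((r:ℝ) - j))))
      atTop (𝓝 (∏ _j ∈ range r, (1:ℝ))) :=
    tendsto_finset_prod _ (fun j _ => factor_tendsto (j:ℝ) ((r:ℝ) - j))
  rw [Finset.prod_const_one] at hP
  have := Wseq_tendsto.mul hP
  rw [mul_one] at this
  apply this.congr'
  filter_upwards [eventually_ge_atTop r] with n hn
  exact (Cfun_eq n r hn).symm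

/-- For `Re(s) > 1`, `√n (2n)!/4^n · Σ_{r=1}^n 1/((n-r)!(n+r)! r^s) → ζ(s)/√π`. -/
theorem tendsto_factorial_weighted_zeta_sum (s : ℂ) (hs : 1 < s.re) :
    Tendsto (fun n : ℕ =>
        ((Real.sqrt n : ℝ) : ℂ) * ((2 * n).factorial : ℂ) / 4 ^ n *
          ∑ r ∈ Finset.Icc 1 n,
            1 / (((n - r).factorial : ℂ) * ((n + r).factorial : ℂ) * (r : ℂ) ^ s))
      atTop (𝓝 (riemannZeta s / (Real.sqrt Real.pi : ℂ))) := by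
  have hs0 : s ≠ 0 := fun h => by simp [h] at hs; linarith
  set f : ℕ → ℕ → ℂ := fun n r =>
    if r ∈ Finset.Icc 1 n then ((Cfun n r : ℝ) : ℂ) / (r : ℂ) ^ s else 0 with hf
  set g : ℕ → ℂ := fun r => ((1 / Real.sqrt Real.pi : ℝ) : ℂ) * (1 / (r : ℂ) ^ s) with hg
  -- the bound
  obtain ⟨M, hM⟩ := Wseq_tendsto.bddAbove_range
  rw [mem_upperBounds] at hM
  have hM' : ∀ n, Wseq n ≤ M := fun n => hM _ ⟨n, rfl⟩
  have hM0 : 0 ≤ M := le_trans (by simp [Wseq]) (hM' 0)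
  have hnorm : ∀ r : ℕ, ‖(1:ℂ) / (r:ℂ)^s‖ = 1 / (r:ℝ) ^ s.re := by
    intro r
    rcases Nat.eq_zero_or_pos r with rfl | hr
    · simp [Complex.zero_cpow hs0, Real.zero_rpow (by linarith : s.re ≠ 0)]
    · rw [norm_div, norm_one, Complex.norm_natCast_cpow_of_pos hr]
  have hsummable : Summable (fun r : ℕ => M * ‖(1:ℂ) / (r:ℂ)^s‖) := by
    apply Summable.mul_left
    simp_rw [hnorm]
    exact Real.summable_one_div_nat_rpow.mpr hs
  -- pointwise limits
  have hab : ∀ r : ℕ, Tendsto (f · r) atTop (𝓝 (g r)) := by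
    intro r
    rcases Nat.eq_zero_or_pos r with rfl | hr
    · have : ∀ n, f n 0 = 0 := fun n => by simp [hf]
      simp only [this]
      rw [hg]
      simp [Complex.zero_cpow hs0]
    · have hlim : Tendsto (fun n => ((Cfun n r : ℝ) : ℂ) / (r:ℂ)^s) atTop
          (𝓝 (((1 / Real.sqrt Real.pi : ℝ) : ℂ) / (r:ℂ)^s)) :=
        Tendsto.div_const ((Complex.continuous_ofReal.tendsto _).comp (Cfun_tendsto r)) _
      rw [show g r = ((1 / Real.sqrt Real.pi : ℝ) : ℂ) / (r:ℂ)^s by rw [hg]; ring]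
      apply hlim.congr'
      filter_upwards [eventually_ge_atTop r] with n hn
      rw [hf]
      simp only [Finset.mem_Icc]
      rw [if_pos ⟨hr, hn⟩]
  -- bound holds
  have h_bound : ∀ᶠ n in atTop, ∀ r, ‖f n r‖ ≤ M * ‖(1:ℂ) / (r:ℂ)^s‖ := by
    filter_upwards with n r
    simp only [hf]
    by_cases hmem : r ∈ Finset.Icc 1 n
    · rw [if_pos hmem, norm_div, Complex.norm_real, Real.norm_eq_abs,
        abs_of_nonneg (Cfun_nonneg n r)]
      rw [Finset.mem_Icc] at hmem
      have h1 : Cfun n r ≤ M := le_trans (Cfun_le n r hmem.2) (hM' n)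
      have hpos : 0 < ‖(r:ℂ)^s‖ := by
        rw [Complex.norm_natCast_cpow_of_pos (by omega : 0 < r)]
        exact Real.rpow_pos_of_pos (by exact_mod_cast Nat.pos_of_ne_zero (by omega)) _
      rw [norm_div, norm_one, mul_one_div]
      gcongr
    · rw [if_neg hmem]
      simp only [norm_zero]
      positivity
  have hmain := tendsto_tsum_of_dominated_convergence hsummable hab h_bound
  -- identify the two tsums
  have htg : ∑' r, g r = riemannZeta s / (Real.sqrt Real.pi : ℂ) := by
    rw [hg, tsum_mul_left, ← zeta_eq_tsum_one_div_nat_cpow hs]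
    push_cast
    ring
  have htf : ∀ n : ℕ, (∑' r, f n r) =
      ((Real.sqrt n : ℝ) : ℂ) * ((2 * n).factorial : ℂ) / 4 ^ n *
        ∑ r ∈ Finset.Icc 1 n,
          1 / (((n - r).factorial : ℂ) * ((n + r).factorial : ℂ) * (r : ℂ) ^ s) := by
    intro n
    rw [tsum_eq_sum (s := Finset.Icc 1 n) (fun r hr => by simp only [hf]; exact if_neg hr)]
    rw [Finset.mul_sum]
    refine Finset.sum_congr rfl fun r hr => ?_
    simp only [hf]
    rw [if_pos hr]
    have h1 : (((n - r).factorial : ℝ) : ℂ) ≠ 0 := by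
      exact_mod_cast Nat.cast_ne_zero.mpr (n - r).factorial_ne_zero
    have h2 : (((n + r).factorial : ℝ) : ℂ) ≠ 0 := by
      exact_mod_cast Nat.cast_ne_zero.mpr (n + r).factorial_ne_zero
    have h4 : ((4:ℂ)) ^ n ≠ 0 := by norm_num
    unfold Cfun
    push_cast
    ring
  rw [← htg]
  exact hmain.congr (fun n => htf n)
end

section
/- Let s ∈ ℂ with Re(s) > 1. Let χ₄ : ℕ → ℂ be the Dirichlet character mod 4 given by χ₄(r) = 0 if r is even, χ₄(r) = 1 if r ≡ 1 (mod 4), and χ₄(r) = −1 if r ≡ 3 (mod 4). For q ∈ (0,1) set [r]_q = 1 + q + ⋯ + q^{r-1} and α_r(s,q) = χ₄(r) [r]_q^{-s}. Define β_n(s,q) = Σ_{r=1}^{n} q^r α_r(s,q) / ((q;q)_{n-r} (q;q)_{n+r}) and T_n(s,q) = √n · (2n)! · (1-q)^{2n} β_n(s,q) / 4^n. Then for each n the limit A_n(s) := lim_{q→1⁻} T_n(s,q) exists and lim_{n→∞} A_n(s) = β(s)/√π, where β(s) = Σ_{k=0}^{∞} (-1)^k/(2k+1)^s is the Dirichlet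 beta function. -/
open Finset Filter Topology

/-- The `q`-integer `[r]_q = 1 + q + ⋯ + q^{r-1}`. -/
noncomputable def qInt (q : ℝ) (r : ℕ) : ℝ := ∑ i ∈ Finset.range r, q ^ i

/-- The Dirichlet character mod 4: `χ₄(r) = 0` for even `r`, `1` if `r ≡ 1 (mod 4)`,
`-1` if `r ≡ 3 (mod 4)`. -/
noncomputable def chiFour (r : ℕ) : ℂ :=
  if r % 4 = 1 then 1 else if r % 4 = 3 then -1 else 0

lemma aux_qInt_one (r : ℕ) : qInt 1 r = r := by simp [qInt]

lemma aux_qInt_cont (r : ℕ) : Continuous fun q : ℝ => qInt q r := by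
  unfold qInt; exact continuous_finset_sum _ fun i _ => continuous_pow i

lemma aux_one_sub_pow (q : ℝ) (m : ℕ) : 1 - q ^ m = (1 - q) * qInt q m := by
  unfold qInt
  linear_combination geom_sum_mul q m

noncomputable def qP (q : ℝ) (m : ℕ) : ℝ := ∏ j ∈ Finset.range m, qInt q (j + 1)

lemma aux_qP_one (m : ℕ) : qP 1 m = m.factorial := by
  unfold qP
  rw [Finset.prod_congr rfl fun j _ => aux_qInt_one (j + 1), ← Nat.cast_prod,
    Finset.prod_range_add_one_eq_factorial]

lemma aux_qP_cont (m : ℕ) : Continuous fun q : ℝ => qP q m :=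
  continuous_finset_prod _ fun j _ => aux_qInt_cont (j + 1)

lemma aux_qPoch_eq (q : ℝ) (m : ℕ) : qPoch q m = (1 - q) ^ m * qP q m := by
  unfold qPoch qP
  rw [Finset.prod_congr rfl fun j _ => aux_one_sub_pow q (j + 1)]
  rw [Finset.prod_mul_distrib, Finset.prod_const, Finset.card_range]

lemma aux_ratio_tendsto (a b : ℝ) :
    Tendsto (fun n : ℕ => ((n : ℝ) - a) / ((n : ℝ) + b)) atTop (𝓝 1) := by
  have h1 : Tendsto (fun n : ℕ => (n : ℝ) + b) atTop atTop :=
    tendsto_atTop_add_const_right _ b tendsto_natCast_atTop_atTop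
  have h2 : Tendsto (fun n : ℕ => (a + b) / ((n : ℝ) + b)) atTop (𝓝 0) :=
    Tendsto.div_atTop tendsto_const_nhds h1
  have h3 : Tendsto (fun n : ℕ => 1 - (a + b) / ((n : ℝ) + b)) atTop (𝓝 (1 - 0)) :=
    tendsto_const_nhds.sub h2
  rw [sub_zero] at h3
  apply h3.congr'
  filter_upwards [h1.eventually_gt_atTop 0] with n hn
  have hb : (n : ℝ) + b ≠ 0 := ne_of_gt hn
  field_simp
  ring

lemma aux_chiFour_norm (r : ℕ) : ‖chiFour r‖ ≤ 1 := by
  unfold chiFour; split_ifs <;> simp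

lemma aux_chiFour_odd (k : ℕ) : chiFour (2 * k + 1) = (-1) ^ k := by
  unfold chiFour
  rcases Nat.even_or_odd k with he | ho
  · obtain ⟨m, hm⟩ := id he
    rw [if_pos (by omega), Even.neg_one_pow he]
  · obtain ⟨m, hm⟩ := id ho
    rw [if_neg (by omega), if_pos (by omega), Odd.neg_one_pow ho]

lemma aux_chiFour_even (r : ℕ) (h : r % 2 = 0) : chiFour r = 0 := by
  unfold chiFour
  rw [if_neg (by omega), if_neg (by omega)]

lemma aux_d_tendsto :
    Tendsto (fun n : ℕ => Real.sqrt n * ((2 * n).choose n : ℝ) / 4 ^ n) atTop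
      (𝓝 (Real.sqrt Real.pi)⁻¹) := by
  have hstir : ∀ n : ℕ, 1 ≤ n →
      Real.sqrt n * ((2 * n).choose n : ℝ) / 4 ^ n
        = Stirling.stirlingSeq (2 * n) / (Stirling.stirlingSeq n) ^ 2 := by
    intro n hn
    have hfact : (((2 * n).choose n : ℝ)) * (n.factorial : ℝ) * (n.factorial : ℝ)
        = ((2 * n).factorial : ℝ) := by
      have := Nat.choose_mul_factorial_mul_factorial (show n ≤ 2 * n by omega)
      rw [show 2 * n - n = n from by omega] at this
      exact_mod_cast congrArg (Nat.cast : ℕ → ℝ) this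
    have hn0 : (0 : ℝ) < n := by exact_mod_cast hn
    have hsn : Real.sqrt n ≠ 0 := by positivity
    have hs4 : Real.sqrt (2 * ((2 * n : ℕ) : ℝ)) = 2 * Real.sqrt n := by
      push_cast
      rw [show 2 * ((2 : ℝ) * n) = 4 * n by ring, Real.sqrt_mul (by norm_num),
        show (4 : ℝ) = 2 ^ 2 by norm_num, Real.sqrt_sq (by norm_num)]
    have hs2 : Real.sqrt (2 * (n : ℝ)) ^ 2 = 2 * n := Real.sq_sqrt (by positivity)
    have hpow : (((2 * n : ℕ) : ℝ) / Real.exp 1) ^ (2 * n)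
        = 4 ^ n * (((n : ℝ) / Real.exp 1) ^ n) ^ 2 := by
      push_cast
      rw [show (4 : ℝ) ^ n = 2 ^ (2 * n) from by
        rw [show (4 : ℝ) = 2 ^ 2 from by norm_num, ← pow_mul]]
      ring
    have he : ((n : ℝ) / Real.exp 1) ^ n ≠ 0 := by positivity
    have hf : (n.factorial : ℝ) ≠ 0 := by positivity
    have h4 : (4 : ℝ) ^ n ≠ 0 := by positivity
    unfold Stirling.stirlingSeq
    rw [hs4, hpow, ← hfact, div_pow (n.factorial : ℝ), mul_pow, hs2]
    field_simp
    have hss : Real.sqrt n * Real.sqrt n = (n : ℝ) := Real.mul_self_sqrt hn0.le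
    linear_combination (((2 * n).choose n : ℝ)) * hss
  have h2n : Tendsto (fun n : ℕ => Stirling.stirlingSeq (2 * n)) atTop (𝓝 (Real.sqrt Real.pi)) :=
    Stirling.tendsto_stirlingSeq_sqrt_pi.comp (tendsto_id.const_mul_atTop' two_pos)
  have hsq : Tendsto (fun n : ℕ => (Stirling.stirlingSeq n) ^ 2) atTop
      (𝓝 ((Real.sqrt Real.pi) ^ 2)) := Stirling.tendsto_stirlingSeq_sqrt_pi.pow 2
  have hpi : (0 : ℝ) < Real.sqrt Real.pi := Real.sqrt_pos.mpr Real.pi_pos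
  have hdiv := h2n.div hsq (by positivity)
  have hval : Real.sqrt Real.pi / (Real.sqrt Real.pi) ^ 2 = (Real.sqrt Real.pi)⁻¹ := by
    rw [sq]; field_simp
  rw [hval] at hdiv
  apply hdiv.congr'
  filter_upwards [eventually_ge_atTop 1] with n hn
  exact (hstir n hn).symm

lemma aux_e_tendsto (r : ℕ) :
    Tendsto (fun n : ℕ => ((n.factorial : ℝ) * (n.factorial : ℝ)) /
      (((n - r).factorial : ℝ) * ((n + r).factorial : ℝ))) atTop (𝓝 1) := by
  induction r with
  | zero => simpa using tendsto_const_nhds.congr (fun n : ℕ => by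
      field_simp)
  | succ r ih =>
    have hr : Tendsto (fun n : ℕ => ((n : ℝ) - r) / ((n : ℝ) + ((r : ℝ) + 1))) atTop (𝓝 1) :=
      aux_ratio_tendsto r ((r : ℝ) + 1)
    have hmul := ih.mul hr
    rw [mul_one] at hmul
    apply hmul.congr'
    filter_upwards [eventually_ge_atTop (r + 1)] with n hn
    have h1 : (n - r).factorial = (n - r) * (n - (r + 1)).factorial := by
      rw [show n - r = (n - (r + 1)) + 1 from by omega, Nat.factorial_succ]
    have h2 : (n + (r + 1)).factorial = (n + r + 1) * (n + r).factorial := by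
      rw [show n + (r + 1) = (n + r) + 1 from rfl, Nat.factorial_succ]
    have hc1 : ((n - r : ℕ) : ℝ) = (n : ℝ) - r := by
      rw [Nat.cast_sub (by omega)]
    have hne1 : ((n - (r + 1)).factorial : ℝ) ≠ 0 := by positivity
    have hne2 : ((n + r).factorial : ℝ) ≠ 0 := by positivity
    have hne3 : (n : ℝ) - r ≠ 0 := by
      have : (r : ℝ) + 1 ≤ (n : ℝ) := by exact_mod_cast hn
      nlinarith
    have hne4 : (n : ℝ) + r + 1 ≠ 0 := by positivity
    rw [h1, h2]
    push_cast
    rw [hc1]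
    field_simp
    ring

/-- Example 3: for `α_r(s,q) = χ₄(r) [r]_q^{-s}`, the two-step limit of `T_n(s,q)` is
`β(s)/√π`, where `β` is the Dirichlet beta function. -/
theorem bailey_zeta_example_dirichletBeta (s : ℂ) (hs : 1 < s.re)
    (α : ℕ → ℝ → ℂ) (hα : ∀ r : ℕ, ∀ q : ℝ, α r q = chiFour r * (qInt q r : ℂ) ^ (-s)) :
    ∃ A : ℕ → ℂ,
      (∀ n : ℕ, 1 ≤ n →
        Tendsto (fun q : ℝ => Tseq α n q) (𝓝[Set.Ioo (0 : ℝ) 1] 1) (𝓝 (A n))) ∧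
      Tendsto A atTop
        (𝓝 ((∑' k : ℕ, (-1 : ℂ) ^ k / ((2 * k + 1 : ℕ) : ℂ) ^ s) /
          (Real.sqrt Real.pi : ℂ))) := by
  classical
  set c : ℕ → ℕ → ℝ := fun n r =>
    Real.sqrt n * ((2 * n).factorial : ℝ) /
      (((n - r).factorial : ℝ) * ((n + r).factorial : ℝ) * 4 ^ n) with hc
  set F : ℕ → ℕ → ℂ := fun n r =>
    if r ∈ Finset.Icc 1 n then ((c n r : ℝ) : ℂ) * (chiFour r * (r : ℂ) ^ (-s)) else 0 with hF
  have hFsum : ∀ n, (∑' r : ℕ, F n r)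
      = ∑ r ∈ Finset.Icc 1 n, ((c n r : ℝ) : ℂ) * (chiFour r * (r : ℂ) ^ (-s)) := by
    intro n
    rw [tsum_eq_sum (s := Finset.Icc 1 n) (fun r hr => by simp only [hF]; exact if_neg hr)]
    exact Finset.sum_congr rfl fun r hr => by simp only [hF]; exact if_pos hr
  refine ⟨fun n => ∑' r : ℕ, F n r, ?_, ?_⟩
  · -- Part 1 : limit as q → 1⁻
    intro n hn
    have l4 : ∀ m : ℕ, Tendsto (fun q : ℝ => ((qP q m : ℝ) : ℂ)) (𝓝 1)
        (𝓝 ((m.factorial : ℝ) : ℂ)) := by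
      intro m
      have := (Complex.continuous_ofReal.comp (aux_qP_cont m)).tendsto 1
      simpa [aux_qP_one, Function.comp_def] using this
    have hterm : ∀ r ∈ Finset.Icc 1 n, Tendsto (fun q : ℝ =>
        (q : ℂ) ^ r * (chiFour r * ((qInt q r : ℝ) : ℂ) ^ (-s)) /
          (((qP q (n - r) : ℝ) : ℂ) * ((qP q (n + r) : ℝ) : ℂ)))
        (𝓝 1)
        (𝓝 ((1 : ℂ) ^ r * (chiFour r * ((r : ℕ) : ℂ) ^ (-s)) /
          ((((n - r).factorial : ℝ) : ℂ) * (((n + r).factorial : ℝ) : ℂ)))) := by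
      intro r hr
      obtain ⟨hr1, hrn⟩ := Finset.mem_Icc.mp hr
      have l1 : Tendsto (fun q : ℝ => (q : ℂ) ^ r) (𝓝 1) (𝓝 ((1 : ℂ) ^ r)) := by
        have hcont : Continuous fun q : ℝ => (q : ℂ) ^ r := Complex.continuous_ofReal.pow r
        simpa using hcont.tendsto 1
      have l2 : Tendsto (fun q : ℝ => ((qInt q r : ℝ) : ℂ)) (𝓝 1) (𝓝 ((r : ℕ) : ℂ)) := by
        have := (Complex.continuous_ofReal.comp (aux_qInt_cont r)).tendsto 1
        simpa [aux_qInt_one, Function.comp_def] using this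
      have hslit : ((r : ℕ) : ℂ) ∈ Complex.slitPlane := by
        rw [Complex.mem_slitPlane_iff]
        left
        simpa using (show 0 < r by omega)
      have l3 : Tendsto (fun q : ℝ => ((qInt q r : ℝ) : ℂ) ^ (-s)) (𝓝 1)
          (𝓝 (((r : ℕ) : ℂ) ^ (-s))) :=
        (continuousAt_cpow_const (b := -s) hslit).tendsto.comp l2
      have hden : (((n - r).factorial : ℝ) : ℂ) * (((n + r).factorial : ℝ) : ℂ) ≠ 0 :=
        mul_ne_zero (Complex.ofReal_ne_zero.mpr (by positivity))
          (Complex.ofReal_ne_zero.mpr (by positivity))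
      exact (l1.mul (tendsto_const_nhds.mul l3)).div ((l4 _).mul (l4 _)) hden
    have hsum := tendsto_finset_sum (Finset.Icc 1 n) hterm
    have hG : Tendsto (fun q : ℝ => (Real.sqrt n : ℂ) * ((2 * n).factorial : ℂ) *
        (∑ r ∈ Finset.Icc 1 n, (q : ℂ) ^ r * (chiFour r * ((qInt q r : ℝ) : ℂ) ^ (-s)) /
          (((qP q (n - r) : ℝ) : ℂ) * ((qP q (n + r) : ℝ) : ℂ))) / 4 ^ n)
        (𝓝[Set.Ioo (0 : ℝ) 1] 1)
        (𝓝 ((Real.sqrt n : ℂ) * ((2 * n).factorial : ℂ) *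
          (∑ r ∈ Finset.Icc 1 n, (1 : ℂ) ^ r * (chiFour r * ((r : ℕ) : ℂ) ^ (-s)) /
            ((((n - r).factorial : ℝ) : ℂ) * (((n + r).factorial : ℝ) : ℂ))) / 4 ^ n)) :=
      ((tendsto_const_nhds.mul hsum).div_const _).mono_left nhdsWithin_le_nhds
    have heq : (fun q : ℝ => (Real.sqrt n : ℂ) * ((2 * n).factorial : ℂ) *
        (∑ r ∈ Finset.Icc 1 n, (q : ℂ) ^ r * (chiFour r * ((qInt q r : ℝ) : ℂ) ^ (-s)) /
          (((qP q (n - r) : ℝ) : ℂ) * ((qP q (n + r) : ℝ) : ℂ))) / 4 ^ n)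
        =ᶠ[𝓝[Set.Ioo (0 : ℝ) 1] 1] (fun q : ℝ => Tseq α n q) := by
      filter_upwards [self_mem_nhdsWithin] with q hq
      obtain ⟨hq0, hq1⟩ := hq
      have hqne : (1 : ℝ) - q ≠ 0 := by linarith
      have hcne : (1 : ℂ) - (q : ℂ) ≠ 0 := by
        simpa using Complex.ofReal_ne_zero.mpr hqne
      have hsum' : ((1 : ℂ) - (q : ℂ)) ^ (2 * n) * ∑ r ∈ Finset.Icc 1 n,
            (q : ℂ) ^ r * α r q / ((qPoch q (n - r) : ℂ) * (qPoch q (n + r) : ℂ))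
          = ∑ r ∈ Finset.Icc 1 n,
            (q : ℂ) ^ r * (chiFour r * ((qInt q r : ℝ) : ℂ) ^ (-s)) /
              (((qP q (n - r) : ℝ) : ℂ) * ((qP q (n + r) : ℝ) : ℂ)) := by
        rw [Finset.mul_sum]
        refine Finset.sum_congr rfl fun r hr => ?_
        obtain ⟨hr1, hrn⟩ := Finset.mem_Icc.mp hr
        rw [hα r q]
        have e1 : ∀ m : ℕ, ((qPoch q m : ℝ) : ℂ)
            = ((1 : ℂ) - (q : ℂ)) ^ m * ((qP q m : ℝ) : ℂ) := by
          intro m; rw [aux_qPoch_eq]; push_cast; ring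
        rw [e1, e1]
        rw [show ((1 : ℂ) - (q : ℂ)) ^ (n - r) * ((qP q (n - r) : ℝ) : ℂ) *
              (((1 : ℂ) - (q : ℂ)) ^ (n + r) * ((qP q (n + r) : ℝ) : ℂ))
            = ((1 : ℂ) - (q : ℂ)) ^ (2 * n) *
              (((qP q (n - r) : ℝ) : ℂ) * ((qP q (n + r) : ℝ) : ℂ)) from by
          rw [show 2 * n = (n - r) + (n + r) from by omega, pow_add]; ring]
        rw [mul_div_assoc']
        exact mul_div_mul_left _ _ (pow_ne_zero _ hcne)
      simp only [Tseq, betaSeq]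
      rw [mul_assoc ((Real.sqrt n : ℂ) * ((2 * n).factorial : ℂ)), hsum']
    have hTs : Tendsto (fun q : ℝ => Tseq α n q) (𝓝[Set.Ioo (0 : ℝ) 1] 1)
        (𝓝 ((Real.sqrt n : ℂ) * ((2 * n).factorial : ℂ) *
          (∑ r ∈ Finset.Icc 1 n, (1 : ℂ) ^ r * (chiFour r * ((r : ℕ) : ℂ) ^ (-s)) /
            ((((n - r).factorial : ℝ) : ℂ) * (((n + r).factorial : ℝ) : ℂ))) / 4 ^ n)) :=
      hG.congr' heq
    have hval : (∑' r : ℕ, F n r)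
        = (Real.sqrt n : ℂ) * ((2 * n).factorial : ℂ) *
          (∑ r ∈ Finset.Icc 1 n, (1 : ℂ) ^ r * (chiFour r * ((r : ℕ) : ℂ) ^ (-s)) /
            ((((n - r).factorial : ℝ) : ℂ) * (((n + r).factorial : ℝ) : ℂ))) / 4 ^ n := by
      rw [hFsum n, Finset.mul_sum, Finset.sum_div]
      refine Finset.sum_congr rfl fun r hr => ?_
      have h1 : (((n - r).factorial : ℕ) : ℂ) ≠ 0 :=
        Nat.cast_ne_zero.mpr (Nat.factorial_ne_zero _)
      have h2 : (((n + r).factorial : ℕ) : ℂ) ≠ 0 :=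
        Nat.cast_ne_zero.mpr (Nat.factorial_ne_zero _)
      have h4 : ((4 : ℂ)) ^ n ≠ 0 := by norm_num
      simp only [hc]
      push_cast
      rw [one_pow]
      field_simp
    show Tendsto (fun q : ℝ => Tseq α n q) (𝓝[Set.Ioo (0 : ℝ) 1] 1) (𝓝 (∑' r : ℕ, F n r))
    rw [hval]
    exact hTs
  · -- Part 2 : limit as n → ∞
    set g : ℕ → ℂ := fun r => chiFour r * (r : ℂ) ^ (-s) / (Real.sqrt Real.pi : ℂ) with hg
    obtain ⟨B, hB⟩ := aux_d_tendsto.bddAbove_range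
    have hBle : ∀ n : ℕ, Real.sqrt n * ((2 * n).choose n : ℝ) / 4 ^ n ≤ B :=
      fun n => hB ⟨n, rfl⟩
    have hB0 : 0 ≤ B := le_trans (by positivity) (hBle 0)
    have hcB : ∀ n r, r ∈ Finset.Icc 1 n → c n r ≤ B := by
      intro n r hr
      obtain ⟨hr1, hrn⟩ := Finset.mem_Icc.mp hr
      have hkey : c n r = Real.sqrt n * ((2 * n).choose (n - r) : ℝ) / 4 ^ n := by
        have hle : n - r ≤ 2 * n := by omega
        have hnat := Nat.choose_mul_factorial_mul_factorial hle
        rw [show 2 * n - (n - r) = n + r from by omega] at hnat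
        have hcast : (((2 * n).choose (n - r) : ℝ)) * ((n - r).factorial : ℝ) *
            ((n + r).factorial : ℝ) = ((2 * n).factorial : ℝ) := by
          exact_mod_cast congrArg (Nat.cast : ℕ → ℝ) hnat
        have f1 : ((n - r).factorial : ℝ) ≠ 0 := by positivity
        have f2 : ((n + r).factorial : ℝ) ≠ 0 := by positivity
        simp only [hc]
        rw [← hcast]
        field_simp
      rw [hkey]
      refine le_trans ?_ (hBle n)
      have hch : ((2 * n).choose (n - r) : ℝ) ≤ ((2 * n).choose n : ℝ) := by
        have := Nat.choose_le_middle (n - r) (2 * n)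
        rw [show 2 * n / 2 = n from by omega] at this
        exact_mod_cast this
      gcongr
    have hc_nonneg : ∀ n r : ℕ, 0 ≤ c n r := fun n r => by
      simp only [hc]; positivity
    have h_bound : ∀ n : ℕ, ∀ r : ℕ, ‖F n r‖ ≤ B * (r : ℝ) ^ (-s.re) := by
      intro n r
      by_cases hr : r ∈ Finset.Icc 1 n
      · have hr1 : 1 ≤ r := (Finset.mem_Icc.mp hr).1
        simp only [hF, if_pos hr]
        rw [norm_mul, norm_mul, Complex.norm_real, Real.norm_eq_abs,
          Complex.norm_natCast_cpow_of_pos (by omega), Complex.neg_re,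
          abs_of_nonneg (hc_nonneg n r)]
        have hX : (0 : ℝ) ≤ (r : ℝ) ^ (-s.re) := by positivity
        calc c n r * (‖chiFour r‖ * (r : ℝ) ^ (-s.re))
            ≤ B * (1 * (r : ℝ) ^ (-s.re)) :=
              mul_le_mul (hcB n r hr) (mul_le_mul_of_nonneg_right (aux_chiFour_norm r) hX)
                (by positivity) hB0
          _ = B * (r : ℝ) ^ (-s.re) := by ring
      · simp only [hF, if_neg hr, norm_zero]
        positivity
    have h_sum : Summable (fun r : ℕ => B * (r : ℝ) ^ (-s.re)) :=
      (Real.summable_nat_rpow.mpr (by linarith)).mul_left B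
    have hab : ∀ r : ℕ, Tendsto (fun n => F n r) atTop (𝓝 (g r)) := by
      intro r
      rcases Nat.eq_zero_or_pos r with rfl | hr1
      · have hz : ∀ n, F n 0 = 0 := fun n => by
          simp only [hF]; exact if_neg (by simp)
        have hgz : g 0 = 0 := by simp [hg, chiFour]
        rw [hgz]
        exact (tendsto_const_nhds : Tendsto (fun _ : ℕ => (0 : ℂ)) atTop (𝓝 0)).congr
          fun n => (hz n).symm
      · have hcr : Tendsto (fun n => c n r) atTop (𝓝 (Real.sqrt Real.pi)⁻¹) := by
          have hmul := aux_d_tendsto.mul (aux_e_tendsto r)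
          rw [mul_one] at hmul
          apply hmul.congr'
          filter_upwards [eventually_ge_atTop r] with n hn
          have hnat := Nat.choose_mul_factorial_mul_factorial (show n ≤ 2 * n by omega)
          rw [show 2 * n - n = n from by omega] at hnat
          have hcast : (((2 * n).choose n : ℝ)) * (n.factorial : ℝ) * (n.factorial : ℝ)
              = ((2 * n).factorial : ℝ) := by
            exact_mod_cast congrArg (Nat.cast : ℕ → ℝ) hnat
          have f1 : ((n - r).factorial : ℝ) ≠ 0 := by positivity
          have f2 : ((n + r).factorial : ℝ) ≠ 0 := by positivity
          have f3 : (n.factorial : ℝ) ≠ 0 := by positivity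
          simp only [hc]
          rw [← hcast]
          field_simp
        have hofr : Tendsto (fun n => ((c n r : ℝ) : ℂ)) atTop
            (𝓝 (((Real.sqrt Real.pi)⁻¹ : ℝ) : ℂ)) :=
          (Complex.continuous_ofReal.tendsto _).comp hcr
        have hlim := hofr.mul_const (chiFour r * (r : ℂ) ^ (-s))
        have hgval : (((Real.sqrt Real.pi)⁻¹ : ℝ) : ℂ) * (chiFour r * (r : ℂ) ^ (-s))
            = g r := by
          simp only [hg]
          rw [Complex.ofReal_inv, div_eq_mul_inv]
          ring
        rw [hgval] at hlim
        apply hlim.congr'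
        filter_upwards [eventually_ge_atTop r] with n hn
        have hmem : r ∈ Finset.Icc 1 n := Finset.mem_Icc.mpr ⟨hr1, hn⟩
        simp only [hF]
        rw [if_pos hmem]
    have hfinal := tendsto_tsum_of_dominated_convergence h_sum hab
      (Eventually.of_forall h_bound)
    have hval : (∑' r : ℕ, g r)
        = (∑' k : ℕ, (-1 : ℂ) ^ k / ((2 * k + 1 : ℕ) : ℂ) ^ s) /
          (Real.sqrt Real.pi : ℂ) := by
      simp only [hg]
      rw [tsum_div_const]
      congr 1
      have hinj : Function.Injective (fun k : ℕ => 2 * k + 1) := fun a b h => by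
        have h' : 2 * a + 1 = 2 * b + 1 := h
        omega
      rw [← Function.Injective.tsum_eq hinj
        (f := fun r : ℕ => chiFour r * (r : ℂ) ^ (-s)) ?_]
      · exact tsum_congr fun k => by
          rw [aux_chiFour_odd k, Complex.cpow_neg, div_eq_mul_inv]
      · intro x hx
        rcases Nat.even_or_odd x with hev | hod
        · exfalso
          obtain ⟨m, hm⟩ := hev
          have hx0 : chiFour x = 0 := aux_chiFour_even x (by omega)
          rw [Function.mem_support, hx0, zero_mul] at hx
          exact hx rfl
        · obtain ⟨m, hm⟩ := hod
          exact ⟨m, show 2 * m + 1 = x by omega⟩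
    rw [← hval]
    exact hfinal
end
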